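/- arXiv:1712.09897 — 6 statements merged into one kernel-verified Lean document; each statement's English description precedes it below -/
import Mathlib

section
/- Let φ : (0,∞) → ℝ be C² with φ'' > 0 and suppose 1/φ'' is concave. Then for any t ∈ (0,1) the function F_t(x,y) := t·φ(y) + (1−t)·φ(x) − φ(t·y + (1−t)·x) is convex on (0,∞)². -/
open Set

private lemma hasDerivAt_affine_comp {f : ℝ → ℝ} {c e s d : ℝ}
    (h : HasDerivAt f d (c + s * e)) :
    HasDerivAt (fun s => f (c + s * e)) (d * e) s := by
  have h2 : HasDerivAt (fun s : ℝ => c + s * e) e s := by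
    simpa using ((hasDerivAt_id s).mul_const e).const_add c
  exact h.comp s h2

private lemma key_ineq {t dx dy A B C : ℝ} (ht0 : 0 < t) (ht1 : t < 1)
    (hA : 0 < A) (hB : 0 < B) (hC : 0 < C)
    (h : t * (1 / A) + (1 - t) * (1 / B) ≤ 1 / C) :
    (t * dy + (1 - t) * dx) ^ 2 * C ≤ t * A * dy ^ 2 + (1 - t) * B * dx ^ 2 := by
  have ht1' : 0 < 1 - t := by linarith
  have h1 : C * (t * B + (1 - t) * A) ≤ A * B := by
    calc C * (t * B + (1 - t) * A) = (C * A * B) * (t * (1/A) + (1-t) * (1/B)) := by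
          field_simp
      _ ≤ (C * A * B) * (1 / C) := by
          apply mul_le_mul_of_nonneg_left h (by positivity)
      _ = A * B := by field_simp
  have hpos : 0 < t * B + (1 - t) * A := by positivity
  have h3 : ((t*dy+(1-t)*dx)^2 * C) * (t*B+(1-t)*A)
      ≤ (t*A*dy^2 + (1-t)*B*dx^2) * (t*B+(1-t)*A) := by
    calc ((t*dy+(1-t)*dx)^2 * C) * (t*B+(1-t)*A)
        ≤ (t*dy+(1-t)*dx)^2 * (A*B) := by
          nlinarith [mul_le_mul_of_nonneg_left h1 (sq_nonneg (t*dy+(1-t)*dx))]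
      _ ≤ (t*A*dy^2 + (1-t)*B*dx^2) * (t*B+(1-t)*A) := by
          nlinarith [sq_nonneg (A*dy - B*dx), mul_pos ht0 ht1']
  exact le_of_mul_le_mul_right h3 hpos

theorem phi_Ft_convex (φ : ℝ → ℝ)
    (hφ : ContDiffOn ℝ 2 φ (Ioi 0))
    (hφ'' : ∀ x ∈ Ioi (0:ℝ), 0 < iteratedDeriv 2 φ x)
    (hconc : ConcaveOn ℝ (Ioi 0) (fun s => 1 / iteratedDeriv 2 φ s))
    (t : ℝ) (ht : t ∈ Ioo (0:ℝ) 1) :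
    ConvexOn ℝ ((Ioi (0:ℝ)) ×ˢ (Ioi (0:ℝ)))
      (fun q : ℝ × ℝ => t * φ q.2 + (1 - t) * φ q.1 - φ (t * q.2 + (1 - t) * q.1)) := by
  obtain ⟨ht0, ht1⟩ := ht
  have ht1' : 0 < 1 - t := by linarith
  have hiter : iteratedDeriv 2 φ = deriv (deriv φ) := by
    funext x; rw [show (2:ℕ) = 1 + 1 from rfl, iteratedDeriv_succ, iteratedDeriv_one]
  rw [hiter] at hφ'' hconc
  -- differentiability facts
  have hd1 : ∀ x ∈ Ioi (0:ℝ), HasDerivAt φ (deriv φ x) x := by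
    intro x hx
    exact ((hφ.differentiableOn (by norm_num)).differentiableAt
      (isOpen_Ioi.mem_nhds hx)).hasDerivAt
  have hφ' : ContDiffOn ℝ 1 (deriv φ) (Ioi 0) := hφ.deriv_of_isOpen isOpen_Ioi (by norm_num)
  have hd2 : ∀ x ∈ Ioi (0:ℝ), HasDerivAt (deriv φ) (deriv (deriv φ) x) x := by
    intro x hx
    exact ((hφ'.differentiableOn (by norm_num)).differentiableAt
      (isOpen_Ioi.mem_nhds hx)).hasDerivAt
  constructor
  · exact (convex_Ioi 0).prod (convex_Ioi 0)
  rintro ⟨x0, y0⟩ hq0 ⟨x1, y1⟩ hq1 a b ha hb hab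
  simp only [mem_prod, mem_Ioi] at hq0 hq1
  obtain ⟨hx0, hy0⟩ := hq0
  obtain ⟨hx1, hy1⟩ := hq1
  set dx := x1 - x0 with hdx
  set dy := y1 - y0 with hdy
  set c := t * y0 + (1 - t) * x0 with hc
  set e := t * dy + (1 - t) * dx with he
  set S : Set ℝ := {s | 0 < x0 + s * dx ∧ 0 < y0 + s * dy ∧ 0 < c + s * e} with hS
  have hmix : ∀ p q u v : ℝ, 0 < u → 0 < v → 0 ≤ p → 0 ≤ q → p + q = 1 → 0 < p * u + q * v := by
    intro p q u v hu hv hp hq hpq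
    rcases eq_or_lt_of_le hp with h | h
    · have : q = 1 := by linarith
      rw [← h, this]; simpa using hv
    · nlinarith
  have haff : ∀ u v : ℝ, Continuous (fun s : ℝ => u + s * v) := fun u v =>
    continuous_const.add (continuous_id.mul continuous_const)
  have hSopen : IsOpen S := by
    rw [hS, setOf_and, setOf_and]
    exact (isOpen_lt continuous_const (haff x0 dx)).inter
      ((isOpen_lt continuous_const (haff y0 dy)).inter
        (isOpen_lt continuous_const (haff c e)))
  have hSconv : Convex ℝ S := by
    intro u hu v hv p q hp hq hpq
    obtain ⟨hu1, hu2, hu3⟩ := hu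
    obtain ⟨hv1, hv2, hv3⟩ := hv
    refine ⟨?_, ?_, ?_⟩
    · have h' := hmix p q _ _ hu1 hv1 hp hq hpq
      simp only [smul_eq_mul]
      linarith [h', show x0 + (p*u + q*v) * dx = p*(x0+u*dx) + q*(x0+v*dx) from by
        linear_combination (-x0) * hpq]
    · have h' := hmix p q _ _ hu2 hv2 hp hq hpq
      simp only [smul_eq_mul]
      linarith [h', show y0 + (p*u + q*v) * dy = p*(y0+u*dy) + q*(y0+v*dy) from by
        linear_combination (-y0) * hpq]
    · have h' := hmix p q _ _ hu3 hv3 hp hq hpq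
      simp only [smul_eq_mul]
      linarith [h', show c + (p*u + q*v) * e = p*(c+u*e) + q*(c+v*e) from by
        linear_combination (-c) * hpq]
  have h0S : (0:ℝ) ∈ S := by
    refine ⟨by simpa using hx0, by simpa using hy0, ?_⟩
    simp only [zero_mul, add_zero]
    exact hmix t (1-t) y0 x0 hy0 hx0 (le_of_lt ht0) (le_of_lt ht1') (by ring)
  have h1S : (1:ℝ) ∈ S := by
    refine ⟨by simp [hdx]; linarith, by simp [hdy]; linarith, ?_⟩
    have : c + 1 * e = t * y1 + (1 - t) * x1 := by rw [hc, he, hdx, hdy]; ring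
    rw [this]
    exact hmix t (1-t) y1 x1 hy1 hx1 (le_of_lt ht0) (le_of_lt ht1') (by ring)
  -- membership of the three moving points
  have hmemS : ∀ s ∈ S, (0 < x0 + s * dx) ∧ (0 < y0 + s * dy) ∧ (0 < c + s * e) := fun s hs => hs
  set g : ℝ → ℝ := fun s => t * φ (y0 + s * dy) + (1 - t) * φ (x0 + s * dx) - φ (c + s * e)
    with hgdef
  set G : ℝ → ℝ := fun s => t * (deriv φ (y0 + s * dy) * dy)
      + (1 - t) * (deriv φ (x0 + s * dx) * dx) - deriv φ (c + s * e) * e with hGdef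
  have hgd : ∀ s ∈ S, HasDerivAt g (G s) s := by
    intro s hs
    obtain ⟨h1, h2, h3⟩ := hmemS s hs
    exact (((hasDerivAt_affine_comp (hd1 _ h2)).const_mul t).add
      ((hasDerivAt_affine_comp (hd1 _ h1)).const_mul (1-t))).sub
      (hasDerivAt_affine_comp (hd1 _ h3))
  have hGd : ∀ s ∈ S, HasDerivAt G
      (t * (deriv (deriv φ) (y0 + s * dy) * dy * dy)
        + (1 - t) * (deriv (deriv φ) (x0 + s * dx) * dx * dx)
        - deriv (deriv φ) (c + s * e) * e * e) s := by
    intro s hs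
    obtain ⟨h1, h2, h3⟩ := hmemS s hs
    exact ((((hasDerivAt_affine_comp (hd2 _ h2)).mul_const dy).const_mul t).add
      (((hasDerivAt_affine_comp (hd2 _ h1)).mul_const dx).const_mul (1-t))).sub
      ((hasDerivAt_affine_comp (hd2 _ h3)).mul_const e)
  have heq : ∀ s ∈ S, deriv g =ᶠ[nhds s] G := by
    intro s hs
    filter_upwards [hSopen.mem_nhds hs] with u hu
    exact (hgd u hu).deriv
  have hgconv : ConvexOn ℝ S g := by
    apply convexOn_of_deriv2_nonneg' hSconv
    · exact fun s hs => (hgd s hs).differentiableAt.differentiableWithinAt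
    · intro s hs
      exact ((hGd s hs).differentiableAt.congr_of_eventuallyEq (heq s hs)).differentiableWithinAt
    · intro s hs
      obtain ⟨h1, h2, h3⟩ := hmemS s hs
      have hder2 : deriv^[2] g s = t * (deriv (deriv φ) (y0 + s * dy) * dy * dy)
          + (1 - t) * (deriv (deriv φ) (x0 + s * dx) * dx * dx)
          - deriv (deriv φ) (c + s * e) * e * e := by
        show deriv (deriv g) s = _
        rw [(heq s hs).deriv_eq]
        exact (hGd s hs).deriv
      rw [hder2]
      set A := deriv (deriv φ) (y0 + s * dy) with hA
      set B := deriv (deriv φ) (x0 + s * dx) with hB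
      set C := deriv (deriv φ) (c + s * e) with hC
      have hA0 : 0 < A := hφ'' _ h2
      have hB0 : 0 < B := hφ'' _ h1
      have hC0 : 0 < C := hφ'' _ h3
      have hmid : c + s * e = t * (y0 + s * dy) + (1 - t) * (x0 + s * dx) := by
        rw [hc, he]; ring
      have hcon := hconc.2 h2 h1 (le_of_lt ht0) (le_of_lt ht1') (by ring)
      simp only [smul_eq_mul, ← hmid] at hcon
      have := key_ineq (dx := dx) (dy := dy) ht0 ht1 hA0 hB0 hC0 hcon
      rw [he]
      nlinarith [this]
  have hfin := hgconv.2 h0S h1S ha hb hab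
  simp only [hgdef, smul_eq_mul, mul_zero, mul_one, zero_add, zero_mul, add_zero, one_mul]
    at hfin
  have ea : y0 + b * dy = a * y0 + b * y1 := by rw [hdy]; have : a = 1 - b := by linarith
                                                rw [this]; ring
  have eb : x0 + b * dx = a * x0 + b * x1 := by rw [hdx]; have : a = 1 - b := by linarith
                                                rw [this]; ring
  have ec : c + b * e = t * (a * y0 + b * y1) + (1 - t) * (a * x0 + b * x1) := by
    rw [hc, he, hdx, hdy]; have : a = 1 - b := by linarith
    rw [this]; ring
  have e1 : y0 + dy = y1 := by rw [hdy]; ring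
  have e2 : x0 + dx = x1 := by rw [hdx]; ring
  have e3 : c + e = t * y1 + (1 - t) * x1 := by rw [hc, he, hdx, hdy]; ring
  rw [ea, eb, ec, e1, e2, e3] at hfin
  simp only [Prod.smul_mk, Prod.mk_add_mk, smul_eq_mul]
  convert hfin using 2 <;> rw [hc]
end

section
/- Let γ be a probability measure, φ : (0,∞) → ℝ C² with φ'' > 0 and 1/φ'' concave. Then the φ-entropy functional E_γ[w] := ∫ φ(w) dγ − φ(∫ w dγ) is convex on the set of positive integrable functions w with φ(w) integrable. -/
open Set MeasureTheory

/-- Cauchy–Schwarz consequence of concavity of `1/φ''`. -/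
private lemma phi_key_alg (t a b P Q R : ℝ) (ht0 : 0 ≤ t) (ht1 : t ≤ 1)
    (hP : 0 < P) (hQ : 0 < Q) (hR : 0 < R)
    (h : t * (1 / P) + (1 - t) * (1 / Q) ≤ 1 / R) :
    R * (t * a + (1 - t) * b) ^ 2 ≤ t * (P * a ^ 2) + (1 - t) * (Q * b ^ 2) := by
  have ht1' : (0:ℝ) ≤ 1 - t := by linarith
  have h1 : (t * Q + (1 - t) * P) * R ≤ P * Q := by
    rw [mul_one_div, mul_one_div, div_add_div _ _ hP.ne' hQ.ne',
      div_le_div_iff₀ (by positivity) hR] at h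
    nlinarith [h]
  have h2 : (t * a + (1 - t) * b) ^ 2 * (P * Q)
      ≤ (t * Q + (1 - t) * P) * (t * (P * a ^ 2) + (1 - t) * (Q * b ^ 2)) := by
    nlinarith [mul_nonneg (mul_nonneg ht0 ht1') (sq_nonneg (a * P - b * Q))]
  have h3 : 0 ≤ t * (P * a ^ 2) + (1 - t) * (Q * b ^ 2) :=
    add_nonneg (mul_nonneg ht0 (by positivity)) (mul_nonneg ht1' (by positivity))
  have h4 : R * ((t * a + (1 - t) * b) ^ 2 * (P * Q))
      ≤ R * ((t * Q + (1 - t) * P) * (t * (P * a ^ 2) + (1 - t) * (Q * b ^ 2))) :=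
    mul_le_mul_of_nonneg_left h2 hR.le
  have h5 : R * ((t * Q + (1 - t) * P) * (t * (P * a ^ 2) + (1 - t) * (Q * b ^ 2)))
      ≤ (P * Q) * (t * (P * a ^ 2) + (1 - t) * (Q * b ^ 2)) := by
    have := mul_le_mul_of_nonneg_right h1 h3
    nlinarith [this]
  have hPQ : 0 < P * Q := mul_pos hP hQ
  have := h4.trans h5
  exact le_of_mul_le_mul_right (by nlinarith [this]) hPQ

/-- Tangent plane inequality for `G(u,v) = φ(tu+(1-t)v) - tφ(u) - (1-t)φ(v)`,
proved along the segment from `(m₁,m₀)` to `(u,v)` using the MVT twice. -/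
private lemma phi_tangent (φ : ℝ → ℝ)
    (hd1 : ∀ s ∈ Ioi (0:ℝ), HasDerivAt φ (deriv φ s) s)
    (hd2 : ∀ s ∈ Ioi (0:ℝ), HasDerivAt (deriv φ) (iteratedDeriv 2 φ s) s)
    (hφ'' : ∀ s ∈ Ioi (0:ℝ), 0 < iteratedDeriv 2 φ s)
    (hconc : ConcaveOn ℝ (Ioi 0) (fun s => 1 / iteratedDeriv 2 φ s))
    (t : ℝ) (ht0 : 0 ≤ t) (ht1 : t ≤ 1)
    (m₁ m₀ u v : ℝ) (hm₁ : 0 < m₁) (hm₀ : 0 < m₀) (hu : 0 < u) (hv : 0 < v) :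
    φ (t * u + (1 - t) * v) - t * φ u - (1 - t) * φ v
      ≤ (φ (t * m₁ + (1 - t) * m₀) - t * φ m₁ - (1 - t) * φ m₀)
        + (t * (deriv φ (t * m₁ + (1 - t) * m₀) - deriv φ m₁)) * (u - m₁)
        + ((1 - t) * (deriv φ (t * m₁ + (1 - t) * m₀) - deriv φ m₀)) * (v - m₀) := by
  have ht1' : (0:ℝ) ≤ 1 - t := by linarith
  set A := u - m₁ with hA
  set B := v - m₀ with hB
  set p : ℝ → ℝ := fun θ => m₁ + θ * A with hp
  set q : ℝ → ℝ := fun θ => m₀ + θ * B with hq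
  set s : ℝ → ℝ := fun θ => t * p θ + (1 - t) * q θ with hs
  -- positivity along the segment
  have hppos : ∀ θ ∈ Icc (0:ℝ) 1, 0 < p θ := by
    intro θ hθ
    have : p θ = (1 - θ) * m₁ + θ * u := by simp only [hp, hA]; ring
    rw [this]
    rcases eq_or_lt_of_le hθ.1 with h | h
    · simp [← h, hm₁]
    · have : 0 ≤ (1 - θ) * m₁ := mul_nonneg (by linarith [hθ.2]) hm₁.le
      nlinarith
  have hqpos : ∀ θ ∈ Icc (0:ℝ) 1, 0 < q θ := by
    intro θ hθ
    have : q θ = (1 - θ) * m₀ + θ * v := by simp only [hq, hB]; ring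
    rw [this]
    rcases eq_or_lt_of_le hθ.1 with h | h
    · simp [← h, hm₀]
    · have : 0 ≤ (1 - θ) * m₀ := mul_nonneg (by linarith [hθ.2]) hm₀.le
      nlinarith
  have hspos : ∀ θ ∈ Icc (0:ℝ) 1, 0 < s θ := by
    intro θ hθ
    rcases eq_or_lt_of_le ht0 with h | h
    · simp only [hs, ← h]
      simpa using hqpos θ hθ
    · rcases eq_or_lt_of_le ht1 with h1 | h1
      · simp only [hs, h1]
        simpa using hppos θ hθ
      · have := hppos θ hθ; have := hqpos θ hθ
        have h2 : 0 < t * p θ := mul_pos h ‹0 < p θ›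
        have h3 : 0 < (1 - t) * q θ := mul_pos (by linarith) ‹0 < q θ›
        simp only [hs]; linarith
  -- derivatives along the segment
  set k : ℝ → ℝ := fun θ => φ (s θ) - t * φ (p θ) - (1 - t) * φ (q θ) with hk
  set k₁ : ℝ → ℝ := fun θ =>
    deriv φ (s θ) * (t * A + (1 - t) * B) - t * (deriv φ (p θ) * A)
      - (1 - t) * (deriv φ (q θ) * B) with hk₁
  set k₂ : ℝ → ℝ := fun θ =>
    iteratedDeriv 2 φ (s θ) * (t * A + (1 - t) * B) ^ 2
      - t * (iteratedDeriv 2 φ (p θ) * A ^ 2)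
      - (1 - t) * (iteratedDeriv 2 φ (q θ) * B ^ 2) with hk₂
  have hpder : ∀ θ : ℝ, HasDerivAt p A θ := by
    intro θ
    simpa [hp] using ((hasDerivAt_id θ).mul_const A).const_add m₁
  have hqder : ∀ θ : ℝ, HasDerivAt q B θ := by
    intro θ
    simpa [hq] using ((hasDerivAt_id θ).mul_const B).const_add m₀
  have hsder : ∀ θ : ℝ, HasDerivAt s (t * A + (1 - t) * B) θ := by
    intro θ
    exact ((hpder θ).const_mul t).add ((hqder θ).const_mul (1 - t))
  have hkder : ∀ θ ∈ Icc (0:ℝ) 1, HasDerivAt k (k₁ θ) θ := by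
    intro θ hθ
    have h1 : HasDerivAt (fun θ => φ (s θ)) (deriv φ (s θ) * (t * A + (1 - t) * B)) θ :=
      (hd1 _ (hspos θ hθ)).comp θ (hsder θ)
    have h2 : HasDerivAt (fun θ => φ (p θ)) (deriv φ (p θ) * A) θ :=
      (hd1 _ (hppos θ hθ)).comp θ (hpder θ)
    have h3 : HasDerivAt (fun θ => φ (q θ)) (deriv φ (q θ) * B) θ :=
      (hd1 _ (hqpos θ hθ)).comp θ (hqder θ)
    exact (h1.sub (h2.const_mul t)).sub (h3.const_mul (1 - t))
  have hk₁der : ∀ θ ∈ Icc (0:ℝ) 1, HasDerivAt k₁ (k₂ θ) θ := by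
    intro θ hθ
    have h1 : HasDerivAt (fun θ => deriv φ (s θ))
        (iteratedDeriv 2 φ (s θ) * (t * A + (1 - t) * B)) θ :=
      (hd2 _ (hspos θ hθ)).comp θ (hsder θ)
    have h2 : HasDerivAt (fun θ => deriv φ (p θ)) (iteratedDeriv 2 φ (p θ) * A) θ :=
      (hd2 _ (hppos θ hθ)).comp θ (hpder θ)
    have h3 : HasDerivAt (fun θ => deriv φ (q θ)) (iteratedDeriv 2 φ (q θ) * B) θ :=
      (hd2 _ (hqpos θ hθ)).comp θ (hqder θ)
    have := ((h1.mul_const (t * A + (1 - t) * B)).sub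
      ((h2.mul_const A).const_mul t)).sub ((h3.mul_const B).const_mul (1 - t))
    refine this.congr_deriv ?_
    simp only [hk₂]
    ring
  -- second derivative is nonpositive
  have hk₂nonpos : ∀ θ ∈ Icc (0:ℝ) 1, k₂ θ ≤ 0 := by
    intro θ hθ
    have hpθ := hppos θ hθ
    have hqθ := hqpos θ hθ
    have hsθ := hspos θ hθ
    have hcc := hconc.2 hpθ hqθ ht0 ht1' (by ring)
    simp only [smul_eq_mul] at hcc
    have hs' : t * p θ + (1 - t) * q θ = s θ := rfl
    rw [hs'] at hcc
    have := phi_key_alg t A B (iteratedDeriv 2 φ (p θ)) (iteratedDeriv 2 φ (q θ))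
      (iteratedDeriv 2 φ (s θ)) ht0 ht1 (hφ'' _ hpθ) (hφ'' _ hqθ) (hφ'' _ hsθ) hcc
    simp only [hk₂]
    linarith
  -- MVT twice : k 1 - k 0 ≤ k₁ 0
  have hkcont : ContinuousOn k (Icc 0 1) := fun θ hθ =>
    (hkder θ hθ).continuousAt.continuousWithinAt
  obtain ⟨c, hc, hceq⟩ := exists_hasDerivAt_eq_slope k k₁ (by norm_num : (0:ℝ) < 1)
    hkcont (fun θ hθ => hkder θ ⟨hθ.1.le, hθ.2.le⟩)
  have hcIcc : c ∈ Icc (0:ℝ) 1 := ⟨hc.1.le, hc.2.le⟩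
  have hk₁cont : ContinuousOn k₁ (Icc 0 c) := fun θ hθ =>
    (hk₁der θ ⟨hθ.1, hθ.2.trans hc.2.le⟩).continuousAt.continuousWithinAt
  obtain ⟨c', hc', hceq'⟩ := exists_hasDerivAt_eq_slope k₁ k₂ hc.1 hk₁cont
    (fun θ hθ => hk₁der θ ⟨hθ.1.le, hθ.2.le.trans hc.2.le⟩)
  have hc'Icc : c' ∈ Icc (0:ℝ) 1 := ⟨hc'.1.le, hc'.2.le.trans hc.2.le⟩
  have h6 : k₁ c ≤ k₁ 0 := by
    have h7 := hk₂nonpos c' hc'Icc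
    rw [hceq'] at h7
    have : k₁ c - k₁ 0 ≤ 0 := by
      have hcpos : (0:ℝ) < c - 0 := by simpa using hc.1
      have := (div_nonpos_iff.mp h7)
      rcases this with ⟨h, _⟩ | ⟨h, h'⟩
      · linarith
      · linarith
    linarith
  have h8 : k 1 - k 0 ≤ k₁ 0 := by
    rw [hceq] at h6
    have : (k 1 - k 0) / (1 - 0) = k 1 - k 0 := by norm_num
    rw [this] at h6
    exact h6
  -- unfold
  have hk0 : k 0 = φ (t * m₁ + (1 - t) * m₀) - t * φ m₁ - (1 - t) * φ m₀ := by
    simp [hk, hs, hp, hq]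
  have hk1 : k 1 = φ (t * u + (1 - t) * v) - t * φ u - (1 - t) * φ v := by
    simp only [hk, hs, hp, hq, hA, hB, one_mul]
    ring_nf
  have hs0 : s 0 = t * m₁ + (1 - t) * m₀ := by simp [hs, hp, hq]
  have hk₁0 : k₁ 0 = (t * (deriv φ (t * m₁ + (1 - t) * m₀) - deriv φ m₁)) * (u - m₁)
      + ((1 - t) * (deriv φ (t * m₁ + (1 - t) * m₀) - deriv φ m₀)) * (v - m₀) := by
    simp only [hk₁, hs0, hp, hq, hA, hB]
    norm_num
    ring
  rw [hk0, hk1, hk₁0] at h8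
  rw [hA, hB]
  linarith

theorem phi_entropy_convex {α : Type*} [MeasurableSpace α]
    (γ : Measure α) [IsProbabilityMeasure γ] (φ : ℝ → ℝ)
    (hφ : ContDiffOn ℝ 2 φ (Ioi 0))
    (hφ'' : ∀ s ∈ Ioi (0:ℝ), 0 < iteratedDeriv 2 φ s)
    (hconc : ConcaveOn ℝ (Ioi 0) (fun s => 1 / iteratedDeriv 2 φ s))
    (w₀ w₁ : α → ℝ)
    (hw₀pos : ∀ x, 0 < w₀ x) (hw₁pos : ∀ x, 0 < w₁ x)
    (hw₀int : Integrable w₀ γ) (hw₁int : Integrable w₁ γ)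
    (hφw₀ : Integrable (fun x => φ (w₀ x)) γ)
    (hφw₁ : Integrable (fun x => φ (w₁ x)) γ)
    (t : ℝ) (ht : t ∈ Icc (0:ℝ) 1)
    (hφwt : Integrable (fun x => φ (t * w₁ x + (1 - t) * w₀ x)) γ) :
    (∫ x, φ (t * w₁ x + (1 - t) * w₀ x) ∂γ)
        - φ (∫ x, (t * w₁ x + (1 - t) * w₀ x) ∂γ)
      ≤ t * ((∫ x, φ (w₁ x) ∂γ) - φ (∫ x, w₁ x ∂γ))
        + (1 - t) * ((∫ x, φ (w₀ x) ∂γ) - φ (∫ x, w₀ x ∂γ)) := by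
  obtain ⟨ht0, ht1⟩ := ht
  -- first and second derivatives of φ on (0,∞)
  have hd1 : ∀ s ∈ Ioi (0:ℝ), HasDerivAt φ (deriv φ s) s := by
    intro s hs
    exact ((hφ.differentiableOn (by norm_num)).differentiableAt
      (isOpen_Ioi.mem_nhds hs)).hasDerivAt
  have hφ' : ContDiffOn ℝ 1 (deriv φ) (Ioi 0) :=
    hφ.deriv_of_isOpen isOpen_Ioi (by norm_num)
  have hd2 : ∀ s ∈ Ioi (0:ℝ), HasDerivAt (deriv φ) (iteratedDeriv 2 φ s) s := by
    intro s hs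
    have h := ((hφ'.differentiableOn (by norm_num)).differentiableAt
      (isOpen_Ioi.mem_nhds hs)).hasDerivAt
    have : iteratedDeriv 2 φ s = deriv (deriv φ) s := by
      simp [iteratedDeriv_succ, iteratedDeriv_zero]
    rw [this]
    exact h
  set m₁ := ∫ x, w₁ x ∂γ with hm₁def
  set m₀ := ∫ x, w₀ x ∂γ with hm₀def
  have hm₁ : 0 < m₁ := by
    rw [hm₁def, integral_pos_iff_support_of_nonneg (fun x => (hw₁pos x).le) hw₁int]
    have : Function.support w₁ = Set.univ := by
      ext x; simp [Function.support, (hw₁pos x).ne']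
    rw [this]
    simp
  have hm₀ : 0 < m₀ := by
    rw [hm₀def, integral_pos_iff_support_of_nonneg (fun x => (hw₀pos x).le) hw₀int]
    have : Function.support w₀ = Set.univ := by
      ext x; simp [Function.support, (hw₀pos x).ne']
    rw [this]
    simp
  set Gu : ℝ := t * (deriv φ (t * m₁ + (1 - t) * m₀) - deriv φ m₁) with hGu
  set Gv : ℝ := (1 - t) * (deriv φ (t * m₁ + (1 - t) * m₀) - deriv φ m₀) with hGv
  -- pointwise tangent inequality
  have hpt : ∀ x, φ (t * w₁ x + (1 - t) * w₀ x) - t * φ (w₁ x) - (1 - t) * φ (w₀ x)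
      ≤ (φ (t * m₁ + (1 - t) * m₀) - t * φ m₁ - (1 - t) * φ m₀)
        + Gu * (w₁ x - m₁) + Gv * (w₀ x - m₀) := fun x =>
    phi_tangent φ hd1 hd2 hφ'' hconc t ht0 ht1 m₁ m₀ (w₁ x) (w₀ x)
      hm₁ hm₀ (hw₁pos x) (hw₀pos x)
  -- integrate
  have hLint : Integrable
      (fun x => φ (t * w₁ x + (1 - t) * w₀ x) - t * φ (w₁ x) - (1 - t) * φ (w₀ x)) γ :=
    (hφwt.sub (hφw₁.const_mul t)).sub (hφw₀.const_mul (1 - t))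
  have hRint : Integrable
      (fun x => (φ (t * m₁ + (1 - t) * m₀) - t * φ m₁ - (1 - t) * φ m₀)
        + Gu * (w₁ x - m₁) + Gv * (w₀ x - m₀)) γ := by
    apply Integrable.add
    apply Integrable.add
    · exact integrable_const _
    · exact (hw₁int.sub (integrable_const m₁)).const_mul Gu
    · exact (hw₀int.sub (integrable_const m₀)).const_mul Gv
  have hmono := integral_mono hLint hRint hpt
  -- compute both integrals
  have i1 : Integrable (fun x => t * φ (w₁ x)) γ := hφw₁.const_mul t
  have i0 : Integrable (fun x => (1 - t) * φ (w₀ x)) γ := hφw₀.const_mul (1 - t)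
  have iA : Integrable (fun x => φ (t * w₁ x + (1 - t) * w₀ x) - t * φ (w₁ x)) γ :=
    hφwt.sub i1
  have hL : ∫ x, (φ (t * w₁ x + (1 - t) * w₀ x) - t * φ (w₁ x) - (1 - t) * φ (w₀ x)) ∂γ
      = (∫ x, φ (t * w₁ x + (1 - t) * w₀ x) ∂γ) - t * ∫ x, φ (w₁ x) ∂γ
        - (1 - t) * ∫ x, φ (w₀ x) ∂γ := by
    rw [integral_sub iA i0, integral_sub hφwt i1, integral_const_mul, integral_const_mul]
  have j1 : Integrable (fun x => w₁ x - m₁) γ := hw₁int.sub (integrable_const m₁)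
  have j0 : Integrable (fun x => w₀ x - m₀) γ := hw₀int.sub (integrable_const m₀)
  have j1' : Integrable (fun x => Gu * (w₁ x - m₁)) γ := j1.const_mul Gu
  have j0' : Integrable (fun x => Gv * (w₀ x - m₀)) γ := j0.const_mul Gv
  have jc : Integrable (fun _ : α => φ (t * m₁ + (1 - t) * m₀) - t * φ m₁ - (1 - t) * φ m₀) γ :=
    integrable_const _
  have jA : Integrable (fun x => (φ (t * m₁ + (1 - t) * m₀) - t * φ m₁ - (1 - t) * φ m₀)
      + Gu * (w₁ x - m₁)) γ := jc.add j1'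
  have hR : ∫ x, ((φ (t * m₁ + (1 - t) * m₀) - t * φ m₁ - (1 - t) * φ m₀)
        + Gu * (w₁ x - m₁) + Gv * (w₀ x - m₀)) ∂γ
      = φ (t * m₁ + (1 - t) * m₀) - t * φ m₁ - (1 - t) * φ m₀ := by
    rw [integral_add jA j0', integral_add jc j1', integral_const_mul, integral_const_mul,
      integral_sub hw₁int (integrable_const m₁),
      integral_sub hw₀int (integrable_const m₀)]
    simp [← hm₁def, ← hm₀def]
  rw [hL, hR] at hmono
  -- the integral of the convex combination
  have l1 : Integrable (fun x => t * w₁ x) γ := hw₁int.const_mul t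
  have l0 : Integrable (fun x => (1 - t) * w₀ x) γ := hw₀int.const_mul (1 - t)
  have hwt : ∫ x, (t * w₁ x + (1 - t) * w₀ x) ∂γ = t * m₁ + (1 - t) * m₀ := by
    rw [integral_add l1 l0, integral_const_mul, integral_const_mul]
  rw [hwt]
  linarith
end

section
/- The eigenvalues of the 4×4 symmetric matrix M₂ = [[1, 1/2, −κ/2, −κ/4], [1/2, 1, −κ/4, −κ/2], [−κ/2, −κ/4, 2κ, κ], [−κ/4, −κ/2, κ, 2κ]] are λ₁ = (2κ+1−√(5κ²−4κ+1))/4, λ₂ = 3(2κ+1−√(5κ²−4κ+1))/4, λ₃ = (2κ+1+√(5κ²−4κ+1))/4, λ₄ = 3(2κ+1+√(5κ²−4κ+1))/4. -/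
theorem eigenvalues_M2 (κ : ℝ) (hκ : 0 ≤ κ) :
    spectrum ℝ (!![1, 1/2, -κ/2, -κ/4;
                   1/2, 1, -κ/4, -κ/2;
                   -κ/2, -κ/4, 2*κ, κ;
                   -κ/4, -κ/2, κ, 2*κ] : Matrix (Fin 4) (Fin 4) ℝ)
      = {(2*κ + 1 - Real.sqrt (5*κ^2 - 4*κ + 1)) / 4,
         3 * (2*κ + 1 - Real.sqrt (5*κ^2 - 4*κ + 1)) / 4,
         (2*κ + 1 + Real.sqrt (5*κ^2 - 4*κ + 1)) / 4,
         3 * (2*κ + 1 + Real.sqrt (5*κ^2 - 4*κ + 1)) / 4} := by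
  have hnn : 0 ≤ 5*κ^2 - 4*κ + 1 := by nlinarith [sq_nonneg (2*κ - 1), sq_nonneg κ]
  set s := Real.sqrt (5*κ^2 - 4*κ + 1) with hs
  have hs2 : s^2 = 5*κ^2 - 4*κ + 1 := Real.sq_sqrt hnn
  ext x
  rw [spectrum.mem_iff, Matrix.isUnit_iff_isUnit_det, isUnit_iff_ne_zero, not_not]
  have hentry : (algebraMap ℝ (Matrix (Fin 4) (Fin 4) ℝ)) x -
      !![1, 1/2, -κ/2, -κ/4;
         1/2, 1, -κ/4, -κ/2;
         -κ/2, -κ/4, 2*κ, κ;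
         -κ/4, -κ/2, κ, 2*κ] =
      !![x-1, -(1/2), κ/2, κ/4;
         -(1/2), x-1, κ/4, κ/2;
         κ/2, κ/4, x-2*κ, -κ;
         κ/4, κ/2, -κ, x-2*κ] := by
    rw [Matrix.algebraMap_eq_diagonal]
    ext i j
    fin_cases i <;> fin_cases j <;> simp [Matrix.diagonal] <;> ring
  have hdet : (!![x-1, -(1/2), κ/2, κ/4;
         -(1/2), x-1, κ/4, κ/2;
         κ/2, κ/4, x-2*κ, -κ;
         κ/4, κ/2, -κ, x-2*κ] : Matrix (Fin 4) (Fin 4) ℝ).det =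
      (x - (2*κ + 1 - s) / 4) * ((x - 3 * (2*κ + 1 - s) / 4) *
      ((x - (2*κ + 1 + s) / 4) * (x - 3 * (2*κ + 1 + s) / 4))) := by
    simp [Matrix.det_succ_row_zero, Fin.sum_univ_succ, Fin.succAbove]
    ring_nf
    linear_combination ((x - 3*(2*κ+1)/8)^2 - (3/8)*(x^2 - (2*κ+1)*x + 3*(2*κ+1)^2/16)
      - (9/256)*(s^2 + (5*κ^2 - 4*κ + 1))) * hs2
  rw [hentry, hdet]
  simp only [Set.mem_insert_iff, Set.mem_singleton_iff, mul_eq_zero, sub_eq_zero]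
end

section
/- For κ ∈ [0,8], the matrix M₂ = [[1, 1/2, −κ/2, −κ/4], [1/2, 1, −κ/4, −κ/2], [−κ/2, −κ/4, 2κ, κ], [−κ/4, −κ/2, κ, 2κ]] is positive semidefinite. -/
theorem M2_posSemidef (κ : ℝ) (hκ0 : 0 ≤ κ) (hκ8 : κ ≤ 8) :
    (!![1, 1/2, -κ/2, -κ/4;
        1/2, 1, -κ/4, -κ/2;
        -κ/2, -κ/4, 2*κ, κ;
        -κ/4, -κ/2, κ, 2*κ] : Matrix (Fin 4) (Fin 4) ℝ).PosSemidef := by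
  rw [Matrix.posSemidef_iff_dotProduct_mulVec]
  constructor
  · ext i j
    fin_cases i <;> fin_cases j <;>
      simp [Matrix.conjTranspose, Matrix.transpose, Matrix.vecHead, Matrix.vecTail]
  · intro x
    simp only [dotProduct, Matrix.mulVec, Fin.sum_univ_four, star_trivial]
    norm_num [Matrix.cons_val_zero, Matrix.cons_val_one, Matrix.cons_val_two, Matrix.cons_val_three, Matrix.head_cons,
      Matrix.cons_val_fin_one, Matrix.head_fin_const, Matrix.cons_val', Matrix.empty_val',
      Matrix.vecHead, Matrix.vecTail]
    nlinarith [sq_nonneg (x 0 + x 1 - κ/2 * (x 2 + x 3)),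
      sq_nonneg (x 0 - x 1 - κ/2 * (x 2 - x 3)),
      mul_nonneg (mul_nonneg hκ0 (sub_nonneg.2 hκ8)) (sq_nonneg (x 2 + x 3)),
      mul_nonneg (mul_nonneg hκ0 (sub_nonneg.2 hκ8)) (sq_nonneg (x 2 - x 3))]
end

section
/- The maximum over (λ,ν) with λ² ≤ ν and M₂(λ,ν) positive semidefinite of λ_⋆(λ,ν) := min_{X ≠ 0} (Xᵀ M₁(λ,ν) X)/(Xᵀ M₀(λ,ν) X), where M₀(λ,ν) = [[1,λ],[λ,ν]] and M₁(λ,ν) = [[1−λ, (1+λ−ν)/2],[(1+λ−ν)/2, λ]], is achieved at (λ,ν) = (1/2, 1) with value 1/2. -/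
open Matrix

/-- The matrix `M₀(λ,ν)`. -/
noncomputable def M0 (l v : ℝ) : Matrix (Fin 2) (Fin 2) ℝ := !![1, l; l, v]

/-- The matrix `M₁(λ,ν)`. -/
noncomputable def M1 (l v : ℝ) : Matrix (Fin 2) (Fin 2) ℝ :=
  !![1 - l, (1 + l - v)/2; (1 + l - v)/2, l]

/-- The matrix `M₂(λ,ν)` depending on the parameter `κ`. -/
noncomputable def M2 (κ l v : ℝ) : Matrix (Fin 4) (Fin 4) ℝ :=
  !![1, l, -κ/2, -κ*l/2;
     l, v, -κ*l/2, -κ*v/2;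
     -κ/2, -κ*l/2, 2*κ, 2*κ*l;
     -κ*l/2, -κ*v/2, 2*κ*l, 2*κ*v]

/-- `λ⋆(λ,ν) = min_{X ≠ 0} (Xᵀ M₁ X)/(Xᵀ M₀ X)`. -/
noncomputable def lamStar (l v : ℝ) : ℝ :=
  sInf {r : ℝ | ∃ X : Fin 2 → ℝ, X ≠ 0 ∧
    r = (X ⬝ᵥ (M1 l v) *ᵥ X) / (X ⬝ᵥ (M0 l v) *ᵥ X)}

lemma ratio_le_half (a b : ℝ) (hb : 0 ≤ b) (h : 2 * a ≤ b) : a / b ≤ 1/2 := by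
  rcases eq_or_lt_of_le hb with h0 | h0
  · rw [← h0, div_zero]; norm_num
  · rw [div_le_iff₀ h0]; linarith

lemma key (l v : ℝ) (hlv : l^2 ≤ v) :
    ∃ X : Fin 2 → ℝ, X ≠ 0 ∧ (X ⬝ᵥ (M1 l v) *ᵥ X) / (X ⬝ᵥ (M0 l v) *ᵥ X) ≤ 1/2 := by
  rcases le_or_gt (1/2) l with h | h
  · refine ⟨![1, 0], ?_, ?_⟩
    · intro hc; have := congrFun hc 0; simp at this
    · have h0 : (![1, 0] : Fin 2 → ℝ) ⬝ᵥ (M0 l v) *ᵥ ![1, 0] = 1 := by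
        simp [M0, dotProduct, mulVec, Fin.sum_univ_two]
      have h1 : (![1, 0] : Fin 2 → ℝ) ⬝ᵥ (M1 l v) *ᵥ ![1, 0] = 1 - l := by
        simp [M1, dotProduct, mulVec, Fin.sum_univ_two]
      rw [h0, h1]; apply ratio_le_half <;> [norm_num; linarith]
  · refine ⟨![v - 1, 1 - 2*l], ?_, ?_⟩
    · intro hc; have := congrFun hc 1; simp at this; linarith
    · have h0 : (![v-1, 1-2*l] : Fin 2 → ℝ) ⬝ᵥ (M0 l v) *ᵥ ![v-1, 1-2*l] =
          (v-1)^2 + 2*l*(v-1)*(1-2*l) + v*(1-2*l)^2 := by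
        simp [M0, dotProduct, mulVec, Fin.sum_univ_two]; ring
      have h1 : (![v-1, 1-2*l] : Fin 2 → ℝ) ⬝ᵥ (M1 l v) *ᵥ ![v-1, 1-2*l] =
          (1-l)*(v-1)^2 + (1+l-v)*(v-1)*(1-2*l) + l*(1-2*l)^2 := by
        simp [M1, dotProduct, mulVec, Fin.sum_univ_two]; ring
      rw [h0, h1]
      apply ratio_le_half
      · nlinarith [sq_nonneg ((v-1) + l*(1-2*l)), mul_nonneg (sub_nonneg.mpr hlv) (sq_nonneg (1-2*l))]
      · nlinarith [mul_nonneg (by linarith : (0:ℝ) ≤ 1-2*l) (sq_nonneg (v - (1+2*l)/2)),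
          mul_nonneg (by linarith : (0:ℝ) ≤ 1-2*l) (sq_nonneg (l - 1/2))]

theorem lamStar_max_at_half_one (κ : ℝ) (hκ0 : 0 ≤ κ) (hκ8 : κ ≤ 8) :
    lamStar (1/2) 1 = 1/2
      ∧ ((1/2 : ℝ)^2 ≤ 1 ∧ (M2 κ (1/2) 1).PosSemidef)
      ∧ ∀ l v : ℝ, l^2 ≤ v → (M2 κ l v).PosSemidef → lamStar l v ≤ 1/2 := by
  refine ⟨?_, ⟨by norm_num, ?_⟩, ?_⟩
  · have hset : {r : ℝ | ∃ X : Fin 2 → ℝ, X ≠ 0 ∧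
        r = (X ⬝ᵥ (M1 (1/2) 1) *ᵥ X) / (X ⬝ᵥ (M0 (1/2) 1) *ᵥ X)} = {1/2} := by
      ext r
      simp only [Set.mem_setOf_eq, Set.mem_singleton_iff]
      constructor
      · rintro ⟨X, hX, rfl⟩
        have h0 : X 0 ≠ 0 ∨ X 1 ≠ 0 := by
          by_contra hcon
          push_neg at hcon
          apply hX
          ext i; fin_cases i <;> simp [hcon.1, hcon.2]
        have hq : X ⬝ᵥ (M0 (1/2) 1) *ᵥ X = X 0^2 + X 0 * X 1 + X 1^2 := by
          simp [M0, dotProduct, mulVec, Fin.sum_univ_two]; ring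
        have hq1 : X ⬝ᵥ (M1 (1/2) 1) *ᵥ X = (X 0^2 + X 0 * X 1 + X 1^2)/2 := by
          simp [M1, dotProduct, mulVec, Fin.sum_univ_two]; ring
        have hpos : 0 < X 0^2 + X 0 * X 1 + X 1^2 := by
          rcases h0 with hh | hh
          · nlinarith [sq_nonneg (X 0 + X 1), sq_nonneg (X 1), mul_self_pos.mpr hh]
          · nlinarith [sq_nonneg (X 0 + X 1), sq_nonneg (X 0), mul_self_pos.mpr hh]
        rw [hq, hq1]
        rw [div_right_comm, div_self hpos.ne']
      · rintro rfl
        refine ⟨![1, 0], ?_, ?_⟩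
        · intro hc; have := congrFun hc 0; simp at this
        · simp [M0, M1, dotProduct, mulVec, Fin.sum_univ_two]
          norm_num
    unfold lamStar
    rw [hset, csInf_singleton]
  · apply PosSemidef.of_dotProduct_mulVec_nonneg
    · ext i j
      fin_cases i <;> fin_cases j <;>
        simp [M2, Matrix.conjTranspose_apply]
    · intro x
      have hQ : star x ⬝ᵥ (M2 κ (1/2) 1) *ᵥ x =
          (x 0 - κ/2*x 2 + (x 1 - κ/2*x 3)/2)^2 + (3/4)*(x 1 - κ/2*x 3)^2
          + κ*(8-κ)/4 * ((x 2 + x 3/2)^2 + (3/4)*(x 3)^2) := by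
        simp [M2, dotProduct, mulVec, Fin.sum_univ_four]; ring
      rw [hQ]
      have h8 : (0:ℝ) ≤ 8 - κ := by linarith
      positivity
  · intro l v hlv _
    unfold lamStar
    by_cases hbdd : BddBelow {r : ℝ | ∃ X : Fin 2 → ℝ, X ≠ 0 ∧
      r = (X ⬝ᵥ (M1 l v) *ᵥ X) / (X ⬝ᵥ (M0 l v) *ᵥ X)}
    · obtain ⟨X, hX, hle⟩ := key l v hlv
      exact le_trans (csInf_le hbdd ⟨X, hX, rfl⟩) hle
    · rw [Real.sInf_of_not_bddBelow hbdd]; norm_num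
end

section
/- Let κ_p = (p−1)(2−p)/p > 0 for p ∈ (1,2) and let e : [0,∞) → [0,∞) be a C² function with e(t) → 0 and e'(t) → 0 as t → ∞, e' ≤ 0, satisfying e'' + 2e' ≥ κ_p·(e')²/(1 + e). Define F(s) := (1 + s − (1+s)^{κ_p})/(1 − κ_p). Then e'(t) + 2·F(e(t)) ≤ 0 for all t ≥ 0. -/
open Real Filter

theorem improved_decay_ode (p : ℝ) (hp : p ∈ Set.Ioo (1:ℝ) 2)
    (e : ℝ → ℝ) (he : ContDiff ℝ 2 e)
    (henonneg : ∀ t ≥ 0, 0 ≤ e t)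
    (helim : Tendsto e atTop (nhds 0))
    (he'lim : Tendsto (deriv e) atTop (nhds 0))
    (he'nonpos : ∀ t ≥ 0, deriv e t ≤ 0)
    (hineq : ∀ t ≥ 0, iteratedDeriv 2 e t + 2 * deriv e t ≥
      ((p - 1) * (2 - p) / p) * (deriv e t)^2 / (1 + e t)) :
    ∀ t ≥ 0, deriv e t
        + 2 * ((1 + e t - (1 + e t) ^ ((p - 1) * (2 - p) / p)) / (1 - (p - 1) * (2 - p) / p))
      ≤ 0 := by
  obtain ⟨hp1, hp2⟩ := hp
  have hp0 : (0:ℝ) < p := by linarith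
  set κ : ℝ := (p - 1) * (2 - p) / p with hκdef
  have hκ0 : 0 < κ := div_pos (mul_pos (by linarith) (by linarith)) hp0
  have hκ1 : κ < 1 := by
    rw [hκdef, div_lt_one hp0]; nlinarith
  have hκne : (1:ℝ) - κ ≠ 0 := by linarith
  have hediff : Differentiable ℝ e := he.differentiable (by norm_num)
  have hd1 : Differentiable ℝ (deriv e) := by
    have h2 : ContDiff ℝ ((1:ℕ∞)+1) e := by norm_num at he ⊢; exact he
    exact (contDiff_succ_iff_deriv.mp h2).2.2.differentiable (by norm_num)
  have hit2 : iteratedDeriv 2 e = deriv (deriv e) := by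
    rw [iteratedDeriv_succ, iteratedDeriv_one]
  set F : ℝ → ℝ := fun s => (1 + s - (1 + s) ^ κ) / (1 - κ) with hF
  set G : ℝ → ℝ := fun t => (deriv e t + 2 * F (e t)) / (1 + e t) ^ κ with hG
  -- positivity of 1 + e on [0,∞)
  have hpos : ∀ t : ℝ, 0 ≤ t → 0 < 1 + e t := fun t ht => by
    have := henonneg t ht; linarith
  -- derivative of G
  have hGderiv : ∀ t : ℝ, 0 < 1 + e t →
      HasDerivAt G
        (((deriv (deriv e) t + 2 * ((deriv e t - deriv e t * κ * (1 + e t) ^ (κ - 1)) / (1 - κ)))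
            * (1 + e t) ^ κ
          - (deriv e t + 2 * F (e t)) * (deriv e t * κ * (1 + e t) ^ (κ - 1)))
          / ((1 + e t) ^ κ) ^ 2) t := by
    intro t h1
    have hde : HasDerivAt e (deriv e t) t := (hediff t).hasDerivAt
    have hde2 : HasDerivAt (deriv e) (deriv (deriv e) t) t := (hd1 t).hasDerivAt
    have h1e : HasDerivAt (fun t => 1 + e t) (deriv e t) t := by
      exact hde.const_add 1
    have hrpow : HasDerivAt (fun t => (1 + e t) ^ κ)
        (deriv e t * κ * (1 + e t) ^ (κ - 1)) t :=
      h1e.rpow_const (Or.inl (ne_of_gt h1))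
    have hFe : HasDerivAt (fun t => F (e t))
        ((deriv e t - deriv e t * κ * (1 + e t) ^ (κ - 1)) / (1 - κ)) t := by
      simpa [hF] using (h1e.sub hrpow).div_const (1 - κ)
    have hN : HasDerivAt (fun t => deriv e t + 2 * F (e t))
        (deriv (deriv e) t + 2 * ((deriv e t - deriv e t * κ * (1 + e t) ^ (κ - 1)) / (1 - κ))) t :=
      hde2.add (hFe.const_mul 2)
    have hD : (1 + e t) ^ κ ≠ 0 := ne_of_gt (rpow_pos_of_pos h1 κ)
    exact hN.div hrpow hD
  -- nonnegativity of the derivative on [0,∞)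
  have hderiv_nonneg : ∀ t : ℝ, 0 ≤ t →
      0 ≤ ((deriv (deriv e) t + 2 * ((deriv e t - deriv e t * κ * (1 + e t) ^ (κ - 1)) / (1 - κ)))
            * (1 + e t) ^ κ
          - (deriv e t + 2 * F (e t)) * (deriv e t * κ * (1 + e t) ^ (κ - 1)))
          / ((1 + e t) ^ κ) ^ 2 := by
    intro t ht
    have h1 := hpos t ht
    set A := 1 + e t with hA
    set B := A ^ (κ - 1) with hB
    have hBpos : 0 < B := rpow_pos_of_pos h1 _
    have hAκ : A ^ κ = B * A := by
      rw [hB, ← Real.rpow_add_one (ne_of_gt h1) (κ - 1)]; ring_nf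
    have hkey : A * (deriv (deriv e) t + 2 * deriv e t) - κ * (deriv e t) ^ 2 ≥ 0 := by
      have := hineq t ht
      rw [hit2] at this
      rw [ge_iff_le, div_le_iff₀ h1] at this
      nlinarith
    have hnum : (deriv (deriv e) t + 2 * ((deriv e t - deriv e t * κ * B) / (1 - κ))) * (B * A)
          - (deriv e t + 2 * F (e t)) * (deriv e t * κ * B)
        = B * (A * (deriv (deriv e) t + 2 * deriv e t) - κ * (deriv e t) ^ 2) := by
      rw [hF]
      simp only [← hA, hAκ]
      field_simp
      ring
    rw [hAκ]
    apply div_nonneg _ (sq_nonneg _)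
    rw [hnum]
    exact mul_nonneg hBpos.le hkey
  -- G is monotone on [0,∞)
  have hmono : MonotoneOn G (Set.Ici 0) := by
    apply monotoneOn_of_deriv_nonneg (convex_Ici 0)
    · intro x hx
      exact ((hGderiv x (hpos x hx)).continuousAt).continuousWithinAt
    · intro x hx
      rw [interior_Ici] at hx
      exact ((hGderiv x (hpos x hx.le)).differentiableAt).differentiableWithinAt
    · intro x hx
      rw [interior_Ici] at hx
      rw [(hGderiv x (hpos x hx.le)).deriv]
      exact hderiv_nonneg x hx.le
  -- G tends to 0 at infinity
  have h1lim : Tendsto (fun t => 1 + e t) atTop (nhds 1) := by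
    simpa using tendsto_const_nhds.add helim
  have hpowlim : Tendsto (fun t => (1 + e t) ^ κ) atTop (nhds 1) := by
    have hc : ContinuousAt (fun x : ℝ => x ^ κ) 1 :=
      Real.continuousAt_rpow_const 1 κ (Or.inl one_ne_zero)
    have := hc.tendsto.comp h1lim
    rw [one_rpow] at this
    exact this
  have hFlim : Tendsto (fun t => F (e t)) atTop (nhds 0) := by
    have : Tendsto (fun t => (1 + e t - (1 + e t) ^ κ) / (1 - κ)) atTop (nhds ((1 - 1) / (1 - κ))) :=
      (h1lim.sub hpowlim).div_const (1 - κ)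
    simpa [hF] using this
  have hGlim : Tendsto G atTop (nhds 0) := by
    have hnum : Tendsto (fun t => deriv e t + 2 * F (e t)) atTop (nhds (0 + 2 * 0)) :=
      he'lim.add (hFlim.const_mul 2)
    have := hnum.div hpowlim one_ne_zero
    simp only [mul_zero, add_zero, div_one] at this
    exact this
  -- conclude G ≤ 0 on [0,∞)
  have hGle : ∀ t : ℝ, 0 ≤ t → G t ≤ 0 := by
    intro t ht
    refine ge_of_tendsto hGlim ?_
    filter_upwards [eventually_ge_atTop t] with s hs
    exact hmono (Set.mem_Ici.mpr ht) (Set.mem_Ici.mpr (le_trans ht hs)) hs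
  intro t ht
  have h1 := hpos t ht
  have hDpos : 0 < (1 + e t) ^ κ := rpow_pos_of_pos h1 κ
  have := hGle t ht
  rw [hG, div_nonpos_iff] at this
  rcases this with ⟨_, h2⟩ | ⟨h, _⟩
  · linarith
  · simpa [hF] using h
end
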